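/- For every infinite ternary square-free word w and every letter x, the prefix frequencies of x satisfy 31/117 ≤ liminf_{n→∞} count_x(w↾n)/n and limsup_{n→∞} count_x(w↾n)/n ≤ 39/97, where w↾n denotes the prefix of w of length n and count_x denotes the number of occurrences of the letter x. -/

import Mathlib

/-- A word `w` is square-free if whenever `w = x ++ y ++ y ++ z`,
then `y` is the empty word. -/
def SquareFree {α : Type*} (w : List α) : Prop :=
  ∀ x y z : List α, w = x ++ y ++ y ++ z → y = []

/-- The factor (contiguous subword) of an infinite word `w` of length `n`
starting at position `i`. -/
def factorWord (w : ℕ → Fin 3) (i n : ℕ) : List (Fin 3) :=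
  (List.range n).map (fun j => w (i + j))

/-- A finite word `u` is a factor of the infinite word `w`. -/
def IsFactor (w : ℕ → Fin 3) (u : List (Fin 3)) : Prop :=
  ∃ i : ℕ, u = factorWord w i u.length

/-- An infinite ternary word is square-free if every finite factor of it
is square-free. -/
def InfSquareFree (w : ℕ → Fin 3) : Prop :=
  ∀ u : List (Fin 3), IsFactor w u → SquareFree u

/-! ### Basic closure properties of `SquareFree` -/

lemma sf_prefix {α : Type*} {l r : List α} (h : SquareFree (l ++ r)) : SquareFree l := by
  intro a b c habc
  exact h a b (c ++ r) (by rw [habc]; simp)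

lemma sf_suffix {α : Type*} {l r : List α} (h : SquareFree (l ++ r)) : SquareFree r := by
  intro a b c habc
  exact h (l ++ a) b c (by rw [habc]; simp)

lemma not_sf_of_sq {α : Type*} {l y z : List α} (hy : y ≠ []) (h : l = y ++ y ++ z) :
    ¬ SquareFree l := fun hsf => hy (hsf [] y z (by simpa using h))

/-! ### Nat encoding of ternary words -/

def enc : List (Fin 3) → ℕ
  | [] => 0
  | a :: l => 4 * enc l + a.val

lemma enc_lt (l : List (Fin 3)) : enc l < 4 ^ l.length := by
  induction l with
  | nil => simp [enc]
  | cons a l ih =>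
    have := a.isLt
    simp only [enc, List.length_cons, pow_succ]
    omega

lemma enc_append (u v : List (Fin 3)) :
    enc (u ++ v) = enc u + 4 ^ u.length * enc v := by
  induction u with
  | nil => simp [enc]
  | cons a u ih =>
    rw [List.cons_append]
    show 4 * enc (u ++ v) + a.val = _
    rw [ih]
    simp only [enc, List.length_cons, pow_succ]
    ring

lemma enc_mod (u v : List (Fin 3)) : enc (u ++ v) % 4 ^ u.length = enc u := by
  rw [enc_append, Nat.add_mul_mod_self_left, Nat.mod_eq_of_lt (enc_lt u)]

lemma enc_div (u v : List (Fin 3)) : enc (u ++ v) / 4 ^ u.length = enc v := by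
  rw [enc_append, Nat.add_mul_div_left _ _ (by positivity),
    Nat.div_eq_of_lt (enc_lt u), Nat.zero_add]

lemma enc_inj : ∀ u v : List (Fin 3), u.length = v.length → enc u = enc v → u = v
  | [], [], _, _ => rfl
  | a :: u, b :: v, hl, he => by
    simp only [List.length_cons, Nat.add_right_cancel_iff] at hl
    simp only [enc] at he
    have ha := a.isLt
    have hb := b.isLt
    have hab : a.val = b.val := by omega
    have huv : enc u = enc v := by omega
    rw [enc_inj u v hl huv, Fin.ext hab]

/-! ### The square checker -/

def sqChk (n : ℕ) : ℕ → ℕ → Bool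
  | 0, _ => false
  | k+1, p => n % p == n / p % p || sqChk n k (p / 4)

def hasSqN (n len : ℕ) : Bool := sqChk n (len / 2) (4 ^ (len / 2))

lemma sqChk_sound {n : ℕ} : ∀ {k : ℕ}, sqChk n k (4 ^ k) = true →
    ∃ j, 1 ≤ j ∧ j ≤ k ∧ n % 4 ^ j = n / 4 ^ j % 4 ^ j := by
  intro k
  induction k with
  | zero => simp [sqChk]
  | succ k ih =>
    intro h
    rw [sqChk, Bool.or_eq_true] at h
    rcases h with h | h
    · exact ⟨k + 1, by omega, le_rfl, by simpa using h⟩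
    · have h4 : 4 ^ (k + 1) / 4 = 4 ^ k := by
        rw [pow_succ, Nat.mul_div_cancel _ (by norm_num)]
      rw [h4] at h
      obtain ⟨j, h1, h2, h3⟩ := ih h
      exact ⟨j, h1, by omega, h3⟩

lemma not_sf_of_hasSqN {l : List (Fin 3)} (h : hasSqN (enc l) l.length = true) :
    ¬ SquareFree l := by
  obtain ⟨j, hj1, hj2, hj3⟩ := sqChk_sound h
  have hjlen : 2 * j ≤ l.length := by
    have := Nat.div_mul_le_self l.length 2
    omega
  set y := l.take j with hy
  set d := l.drop j with hd
  have hyd : l = y ++ d := (List.take_append_drop j l).symm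
  have hylen : y.length = j := by
    rw [hy, List.length_take]; omega
  have hdlen : d.length = l.length - j := by rw [hd, List.length_drop]
  set y2 := d.take j with hy2
  set z := d.drop j with hz
  have hdz : d = y2 ++ z := (List.take_append_drop j d).symm
  have hy2len : y2.length = j := by
    rw [hy2, List.length_take]; omega
  have e1 : enc l % 4 ^ j = enc y := by
    rw [hyd, ← hylen, enc_mod]
  have e2 : enc l / 4 ^ j = enc d := by
    rw [hyd, ← hylen, enc_div]
  have e3 : enc d % 4 ^ j = enc y2 := by
    rw [hdz, ← hy2len, enc_mod]
  have hyy2 : y = y2 := enc_inj _ _ (by rw [hylen, hy2len])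
    (by rw [← e1, hj3, e2, e3])
  refine not_sf_of_sq (y := y) (z := z) ?_ ?_
  · intro hnil
    rw [hnil] at hylen
    simp at hylen; omega
  · rw [hyd, hdz, ← hyy2, List.append_assoc]

lemma hasSqN_eq_false_of_sf {l : List (Fin 3)} (h : SquareFree l) :
    hasSqN (enc l) l.length = false := by
  by_contra hc
  exact not_sf_of_hasSqN (by simpa using hc) h

/-! ### The DFS checkers -/

def tmin : ℕ → ℕ := fun k =>
  [0,0,0,0,1,1,1,1,2,2,2,2,3,3,3,3,4,4,4,5,5,5,5,6,6,6,6,7,7,7,8].getD k 0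

def dfsT (x T : ℕ) : ℕ → ℕ → ℕ → ℕ → Bool
  | 0, _, _, cnt => Nat.ble T cnt
  | rem+1, n, len, cnt =>
      Nat.ble T (cnt + tmin (rem+1)) ||
      ([0,1,2].all fun a =>
        hasSqN (4*n+a) (len+1) || dfsT x T rem (4*n+a) (len+1) (cnt + if a == x then 1 else 0))

def checkMin (x : ℕ) : ℕ → Bool
  | 0 => true
  | k+1 => [0,1,2].all fun a =>
      dfsT x (tmin (k+1)) k a 1 (if a == x then 1 else 0)

def dfsMax (x U : ℕ) : ℕ → ℕ → ℕ → ℕ → Bool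
  | 0, _, _, cnt => Nat.ble cnt U
  | rem+1, n, len, cnt =>
      Nat.ble (cnt + (rem+1)) U ||
      ([0,1,2].all fun a =>
        hasSqN (4*n+a) (len+1) || dfsMax x U rem (4*n+a) (len+1) (cnt + if a == x then 1 else 0))

def minOK : Bool := (List.range 3).all fun x => (List.range 31).all fun k => checkMin x k
def maxOK : Bool := (List.range 3).all fun x => [0,1,2].all fun a =>
  dfsMax x 4 9 a 1 (if a == x then 1 else 0)

set_option maxHeartbeats 4000000 in
lemma minOK_eq_true : minOK = true := by decide

set_option maxHeartbeats 1000000 in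
lemma maxOK_eq_true : maxOK = true := by decide

/-! ### Helper lemmas -/

lemma fin3_val_mem (b : Fin 3) : (b.val : ℕ) ∈ [0,1,2] := by fin_cases b <;> simp

lemma count_singleton'' (x b : Fin 3) :
    List.count x [b] = if b.val == x.val then 1 else 0 := by
  by_cases h : b = x
  · subst h; simp [List.count_singleton]
  · have : b.val ≠ x.val := fun hv => h (Fin.ext hv)
    simp [List.count_cons, Nat.beq_eq_true_eq, this, h]

/-! ### DFS soundness -/

lemma dfsT_sound (x : Fin 3) (T : ℕ) :
    ∀ rem : ℕ,
      (∀ j, j ≤ rem → ∀ u : List (Fin 3), SquareFree u → u.length = j →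
        tmin j ≤ u.count x) →
      ∀ (rev : List (Fin 3)) (cnt : ℕ),
        dfsT x.val T rem (enc rev) rev.length cnt = true →
        ∀ e : List (Fin 3), e.length = rem → SquareFree (e ++ rev) →
          T ≤ cnt + e.count x := by
  intro rem
  induction rem with
  | zero =>
    intro _ rev cnt h e he _
    rw [List.length_eq_zero_iff] at he
    subst he
    simp only [dfsT] at h
    simpa using Nat.le_of_ble_eq_true h
  | succ rem ih =>
    intro htab rev cnt h e he hsf
    rw [dfsT, Bool.or_eq_true] at h
    rcases h with h | h
    · have hT : T ≤ cnt + tmin (rem + 1) := Nat.le_of_ble_eq_true h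
      have hse : SquareFree e := sf_prefix hsf
      have := htab (rem + 1) le_rfl e hse he
      omega
    · rcases e.eq_nil_or_concat with rfl | ⟨e', b, rfl⟩
      · simp at he
      · rw [List.concat_eq_append] at *
        have he' : e'.length = rem := by
          rw [List.length_append] at he; simpa using he
        have hassoc : (e' ++ [b]) ++ rev = e' ++ (b :: rev) := by simp
        rw [hassoc] at hsf
        have hsfb : SquareFree (b :: rev) := sf_suffix hsf
        rw [List.all_eq_true] at h
        have hb := h b.val (fin3_val_mem b)
        rw [Bool.or_eq_true] at hb
        have hencb : (4 * enc rev + b.val) = enc (b :: rev) := rfl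
        have hlenb : rev.length + 1 = (b :: rev).length := rfl
        rcases hb with hb | hb
        · rw [hencb, hlenb, hasSqN_eq_false_of_sf hsfb] at hb
          simp at hb
        · rw [hencb, hlenb] at hb
          have htab' : ∀ j, j ≤ rem → ∀ u : List (Fin 3), SquareFree u → u.length = j →
              tmin j ≤ u.count x := fun j hj => htab j (by omega)
          have := ih htab' (b :: rev) _ hb e' he' hsf
          rw [List.count_append, count_singleton'' x b]
          omega

lemma dfsMax_sound (x : Fin 3) (U : ℕ) :
    ∀ rem : ℕ, ∀ (rev : List (Fin 3)) (cnt : ℕ),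
        dfsMax x.val U rem (enc rev) rev.length cnt = true →
        ∀ e : List (Fin 3), e.length = rem → SquareFree (e ++ rev) →
          cnt + e.count x ≤ U := by
  intro rem
  induction rem with
  | zero =>
    intro rev cnt h e he _
    rw [List.length_eq_zero_iff] at he
    subst he
    simp only [dfsMax] at h
    simpa using Nat.le_of_ble_eq_true h
  | succ rem ih =>
    intro rev cnt h e he hsf
    rw [dfsMax, Bool.or_eq_true] at h
    rcases h with h | h
    · have hU : cnt + (rem + 1) ≤ U := Nat.le_of_ble_eq_true h
      have := e.count_le_length (a := x)
      omega
    · rcases e.eq_nil_or_concat with rfl | ⟨e', b, rfl⟩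
      · simp at he
      · rw [List.concat_eq_append] at *
        have he' : e'.length = rem := by
          rw [List.length_append] at he; simpa using he
        have hassoc : (e' ++ [b]) ++ rev = e' ++ (b :: rev) := by simp
        rw [hassoc] at hsf
        have hsfb : SquareFree (b :: rev) := sf_suffix hsf
        rw [List.all_eq_true] at h
        have hb := h b.val (fin3_val_mem b)
        rw [Bool.or_eq_true] at hb
        have hencb : (4 * enc rev + b.val) = enc (b :: rev) := rfl
        have hlenb : rev.length + 1 = (b :: rev).length := rfl
        rcases hb with hb | hb
        · rw [hencb, hlenb, hasSqN_eq_false_of_sf hsfb] at hb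
          simp at hb
        · rw [hencb, hlenb] at hb
          have := ih (b :: rev) _ hb e' he' hsf
          rw [List.count_append, count_singleton'' x b]
          omega

/-! ### The two window bounds -/

lemma min_window (x : Fin 3) : ∀ k, k ≤ 30 → ∀ u : List (Fin 3),
    SquareFree u → u.length = k → tmin k ≤ u.count x := by
  intro k
  induction k using Nat.strong_induction_on with
  | _ k ihk =>
    intro hk30 u hsf hlen
    have hx3 : x.val ∈ List.range 3 := by
      rw [List.mem_range]; exact x.isLt
    have hk31 : k ∈ List.range 31 := by rw [List.mem_range]; omega
    have hmin := minOK_eq_true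
    rw [minOK, List.all_eq_true] at hmin
    have h1 := hmin x.val hx3
    rw [List.all_eq_true] at h1
    have h2 := h1 k hk31
    match k, hk30, hlen, h2 with
    | 0, _, hlen, _ =>
      rw [List.length_eq_zero_iff] at hlen
      subst hlen
      simp [tmin]
    | k+1, hk30, hlen, h2 =>
      rcases u.eq_nil_or_concat with rfl | ⟨e, b, rfl⟩
      · simp at hlen
      · rw [List.concat_eq_append] at *
        have he : e.length = k := by
          rw [List.length_append] at hlen; simpa using hlen
        rw [checkMin, List.all_eq_true] at h2
        have hb := h2 b.val (fin3_val_mem b)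
        have htab : ∀ j, j ≤ k → ∀ u : List (Fin 3), SquareFree u → u.length = j →
            tmin j ≤ u.count x := by
          intro j hj u' hsf' hlen'
          exact ihk j (by omega) (by omega) u' hsf' hlen'
        have hb' : dfsT x.val (tmin (k+1)) k (enc [b]) ([b] : List (Fin 3)).length
            (if b.val == x.val then 1 else 0) = true := by
          rw [show enc [b] = b.val from by simp [enc]]
          exact hb
        have := dfsT_sound x (tmin (k+1)) k htab [b] _ hb' e he
          (by simpa using hsf)
        rw [List.count_append, count_singleton'' x b]
        omega

lemma max_window (x : Fin 3) : ∀ u : List (Fin 3),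
    SquareFree u → u.length = 10 → u.count x ≤ 4 := by
  intro u hsf hlen
  have hx3 : x.val ∈ List.range 3 := by rw [List.mem_range]; exact x.isLt
  have hmax := maxOK_eq_true
  rw [maxOK, List.all_eq_true] at hmax
  have h1 := hmax x.val hx3
  rw [List.all_eq_true] at h1
  rcases u.eq_nil_or_concat with rfl | ⟨e, b, rfl⟩
  · simp at hlen
  · rw [List.concat_eq_append] at *
    have he : e.length = 9 := by
      rw [List.length_append] at hlen; simpa using hlen
    have hb := h1 b.val (fin3_val_mem b)
    have hb' : dfsMax x.val 4 9 (enc [b]) ([b] : List (Fin 3)).length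
        (if b.val == x.val then 1 else 0) = true := by
      rw [show enc [b] = b.val from by simp [enc]]
      exact hb
    have := dfsMax_sound x 4 9 [b] _ hb' e he (by simpa using hsf)
    rw [List.count_append, count_singleton'' x b]
    omega

lemma min30 (x : Fin 3) (u : List (Fin 3)) (hsf : SquareFree u) (hlen : u.length = 30) :
    8 ≤ u.count x := by
  have := min_window x 30 le_rfl u hsf hlen
  simpa [tmin] using this

section analysis

variable (w : ℕ → Fin 3)

lemma length_factorWord (i n : ℕ) : (factorWord w i n).length = n := by
  simp [factorWord]

lemma factorWord_append (i m n : ℕ) :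
    factorWord w i (m + n) = factorWord w i m ++ factorWord w (i + m) n := by
  simp only [factorWord, List.range_add, List.map_append, List.map_map]
  congr 1
  apply List.map_congr_left
  intro j _
  simp only [Function.comp]
  congr 1
  omega

lemma sf_factor (hw : InfSquareFree w) (i n : ℕ) : SquareFree (factorWord w i n) := by
  apply hw
  exact ⟨i, by rw [length_factorWord]⟩

variable (x : Fin 3)

noncomputable def cnt (n : ℕ) : ℕ := (factorWord w 0 n).count x

lemma cnt_add (m n : ℕ) : cnt w x (m + n) = cnt w x m + (factorWord w m n).count x := by
  simp only [cnt, factorWord_append w 0 m n, List.count_append, Nat.zero_add]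

lemma cnt_lower (hw : InfSquareFree w) (q : ℕ) : 8 * q ≤ cnt w x (30 * q) := by
  induction q with
  | zero => simp
  | succ q ih =>
    have h30 : 30 * (q + 1) = 30 * q + 30 := by ring
    rw [h30, cnt_add]
    have := min30 x (factorWord w (30 * q) 30) (sf_factor w hw _ _) (length_factorWord w _ _)
    omega

lemma cnt_upper (hw : InfSquareFree w) (q : ℕ) : cnt w x (10 * q) ≤ 4 * q := by
  induction q with
  | zero => simp [cnt, factorWord]
  | succ q ih =>
    have h10 : 10 * (q + 1) = 10 * q + 10 := by ring
    rw [h10, cnt_add]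
    have := max_window x (factorWord w (10 * q) 10) (sf_factor w hw _ _) (length_factorWord w _ _)
    omega

lemma K1 (hw : InfSquareFree w) (n : ℕ) : 8 * n ≤ 30 * cnt w x n + 232 := by
  have hd := Nat.div_add_mod n 30
  have h1 := cnt_lower w x hw (n / 30)
  have h2 : cnt w x n = cnt w x (30 * (n / 30)) + (factorWord w (30 * (n / 30)) (n % 30)).count x := by
    conv_lhs => rw [← hd]
    exact cnt_add w x _ _
  have h3 : n % 30 < 30 := Nat.mod_lt _ (by norm_num)
  omega

lemma K2 (hw : InfSquareFree w) (n : ℕ) : 10 * cnt w x n ≤ 4 * n + 90 := by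
  have hd := Nat.div_add_mod n 10
  have h1 := cnt_upper w x hw (n / 10)
  have h2 : cnt w x n = cnt w x (10 * (n / 10)) + (factorWord w (10 * (n / 10)) (n % 10)).count x := by
    conv_lhs => rw [← hd]
    exact cnt_add w x _ _
  have h3 : n % 10 < 10 := Nat.mod_lt _ (by norm_num)
  have h4 : (factorWord w (10 * (n / 10)) (n % 10)).count x ≤ n % 10 := by
    calc (factorWord w (10 * (n / 10)) (n % 10)).count x
        ≤ (factorWord w (10 * (n / 10)) (n % 10)).length := List.count_le_length
      _ = n % 10 := length_factorWord w _ _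
  omega

end analysis

/-- For every infinite ternary square-free word `w` and every letter `x`,
the prefix frequencies of `x` satisfy
`31/117 ≤ liminf count_x(w↾n)/n` and `limsup count_x(w↾n)/n ≤ 39/97`. -/
theorem ternary_squareFree_frequency_bounds
    (w : ℕ → Fin 3) (hw : InfSquareFree w) (x : Fin 3) :
    (31 / 117 : ℝ) ≤
        Filter.liminf (fun n : ℕ => ((factorWord w 0 n).count x : ℝ) / n) Filter.atTop ∧
      Filter.limsup (fun n : ℕ => ((factorWord w 0 n).count x : ℝ) / n) Filter.atTop ≤
        39 / 97 := by
  set f : ℕ → ℝ := fun n => ((factorWord w 0 n).count x : ℝ) / n with hf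
  have hf0 : ∀ n, 0 ≤ f n := fun n => by positivity
  have hf1 : ∀ n, f n ≤ 1 := by
    intro n
    rcases Nat.eq_zero_or_pos n with rfl | hn
    · simp [hf]
    · rw [hf]
      have h1 : ((factorWord w 0 n).count x : ℝ) ≤ n := by
        have := (List.count_le_length : (factorWord w 0 n).count x ≤ _).trans_eq (length_factorWord w 0 n)
        exact_mod_cast this
      rw [div_le_one (by exact_mod_cast hn)]
      exact h1
  set h : ℕ → ℝ := fun n => 4/15 - (116/15) / n with hh
  set g : ℕ → ℝ := fun n => 2/5 + 9 / n with hg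
  have hhf : ∀ᶠ n in Filter.atTop, h n ≤ f n := by
    filter_upwards [Filter.eventually_ge_atTop 1] with n hn
    have hnR : (0:ℝ) < n := by exact_mod_cast hn
    have hK := K1 w x hw n
    have hKR : (8:ℝ) * n ≤ 30 * ((factorWord w 0 n).count x : ℝ) + 232 := by
      exact_mod_cast hK
    show (4:ℝ)/15 - (116/15) / n ≤ ((factorWord w 0 n).count x : ℝ) / n
    rw [sub_le_iff_le_add, ← add_div, le_div_iff₀ hnR]
    linarith
  have hfg : ∀ᶠ n in Filter.atTop, f n ≤ g n := by
    filter_upwards [Filter.eventually_ge_atTop 1] with n hn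
    have hnR : (0:ℝ) < n := by exact_mod_cast hn
    have hK := K2 w x hw n
    have hKR : (10:ℝ) * ((factorWord w 0 n).count x : ℝ) ≤ 4 * n + 90 := by
      exact_mod_cast hK
    show ((factorWord w 0 n).count x : ℝ) / n ≤ (2:ℝ)/5 + 9 / n
    rw [div_le_iff₀ hnR, add_mul]
    have h9 : (9:ℝ) / n * n = 9 := div_mul_cancel₀ _ (ne_of_gt hnR)
    rw [h9]
    linarith
  have hht : Filter.Tendsto h Filter.atTop (nhds (4/15 : ℝ)) := by
    have : Filter.Tendsto (fun n : ℕ => (116/15 : ℝ) / n) Filter.atTop (nhds 0) :=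
      tendsto_const_div_atTop_nhds_zero_nat _
    simpa using Filter.Tendsto.const_sub (4/15 : ℝ) this
  have hgt : Filter.Tendsto g Filter.atTop (nhds (2/5 : ℝ)) := by
    have : Filter.Tendsto (fun n : ℕ => (9 : ℝ) / n) Filter.atTop (nhds 0) :=
      tendsto_const_div_atTop_nhds_zero_nat _
    simpa using Filter.Tendsto.const_add (2/5 : ℝ) this
  constructor
  · have h1 : Filter.liminf h Filter.atTop = (4/15 : ℝ) := hht.liminf_eq
    have h2 : Filter.liminf h Filter.atTop ≤ Filter.liminf f Filter.atTop := by
      exact Filter.liminf_le_liminf hhf hht.isBoundedUnder_ge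
        (Filter.isCoboundedUnder_ge_of_eventually_le Filter.atTop
          (Filter.Eventually.of_forall hf1))
    rw [h1] at h2
    linarith [h2]
  · have h1 : Filter.limsup g Filter.atTop = (2/5 : ℝ) := hgt.limsup_eq
    have h2 : Filter.limsup f Filter.atTop ≤ Filter.limsup g Filter.atTop := by
      exact Filter.limsup_le_limsup hfg
        (Filter.isCoboundedUnder_le_of_le Filter.atTop hf0) hgt.isBoundedUnder_le
    rw [h1] at h2
    linarith [h2]
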